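/- For all natural numbers m ≥ 1 and n ≥ 1: X(m,n) · (X ⊗ I_{2^{m−1}}) = (X ⊗ I_{2^{n−1}}) · X(m,n); that is, a NOT gate on one leg of an X-spider can be moved to any other leg (the derived NOT-commutation rule of the phase-free ZH-calculus, Lemma 3.2). -/

import Mathlib

/-- An `(m,n)`-qubit map: a complex matrix with rows indexed by output
bit strings of length `n` and columns indexed by input bit strings of length `m`. -/
abbrev QMap (m n : ℕ) : Type := Matrix (Fin n → Bool) (Fin m → Bool) ℂ

/-- Canonical identification of a pair of bit strings with a single bit string. -/
def bitEquiv (a b : ℕ) : ((Fin a → Bool) × (Fin b → Bool)) ≃ (Fin (a + b) → Bool) :=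
  (Equiv.sumArrowEquivProdArrow (Fin a) (Fin b) Bool).symm.trans
    (Equiv.arrowCongr finSumFinEquiv (Equiv.refl Bool))

/-- Kronecker (tensor) product of qubit maps, under the canonical identification. -/
def tens {m n m' n' : ℕ} (A : QMap m n) (B : QMap m' n') : QMap (m + m') (n + n') :=
  Matrix.reindex (bitEquiv n n') (bitEquiv m m') (Matrix.kroneckerMap (· * ·) A B)

/-- Transport a qubit map along equalities of the numbers of inputs and outputs. -/
def castQ {m m' n n' : ℕ} (hm : m = m') (hn : n = n') (A : QMap m n) : QMap m' n' :=
  Matrix.reindex (Equiv.arrowCongr (finCongr hn) (Equiv.refl Bool))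
    (Equiv.arrowCongr (finCongr hm) (Equiv.refl Bool)) A

/-- The Z-spider `Z(m,n)`: entry 1 iff all `m+n` bits are equal (all 0 or all 1). -/
def Zsp (m n : ℕ) : QMap m n := fun j i =>
  if ((∀ k, i k = false) ∧ (∀ k, j k = false)) ∨ ((∀ k, i k = true) ∧ (∀ k, j k = true))
  then 1 else 0

/-- The X-spider `X(m,n)`: entry 1 iff the sum mod 2 of all `m+n` bits is 0. -/
def Xsp (m n : ℕ) : QMap m n := fun j i =>
  if ((∑ k, (if i k then (1 : ZMod 2) else 0)) + ∑ k, (if j k then (1 : ZMod 2) else 0)) = 0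
  then 1 else 0

/-- The (phase-free) H-box `H(m,n)`: entry −1 iff all `m+n` bits are 1, else 1. -/
def Hbox (m n : ℕ) : QMap m n := fun j i =>
  if (∀ k, i k = true) ∧ (∀ k, j k = true) then -1 else 1

/-- The Hadamard gate `(1/√2)·[[1,1],[1,−1]]`. -/
noncomputable def Had : QMap 1 1 := fun j i =>
  (Real.sqrt 2 : ℂ)⁻¹ * (if i 0 = true ∧ j 0 = true then -1 else 1)

/-- The NOT gate `[[0,1],[1,0]]`. -/
def Xg : QMap 1 1 := fun j i => if j 0 = i 0 then 0 else 1

/-- The Z gate `diag(1,−1)`. -/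
def Zg : QMap 1 1 := fun j i => if j 0 = i 0 then (if i 0 = true then -1 else 1) else 0

/-- The triangle `[[1,1],[0,1]]` (row `j`, column `i`; the only zero entry is at `j=1, i=0`). -/
def Tri : QMap 1 1 := fun j i => if j 0 = true ∧ i 0 = false then 0 else 1

/-- The AND gate: `|x,y⟩ ↦ |x ∧ y⟩`. -/
def ANDg : QMap 2 1 := fun j i => if j 0 = (i 0 && i 1) then 1 else 0

/-- The swap of two qubits. -/
def swapQ : QMap 2 2 := fun j i => if j 0 = i 1 ∧ j 1 = i 0 then 1 else 0

/-- The cup `|00⟩ + |11⟩`. -/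
def cupQ : QMap 0 2 := fun j _ => if j 0 = j 1 then 1 else 0

/-- The cap `⟨00| + ⟨11|`. -/
def capQ : QMap 2 0 := fun _ i => if i 0 = i 1 then 1 else 0

/-- The scalar `1/√2` as a `(0,0)`-map. -/
noncomputable def starQ : QMap 0 0 := fun _ _ => (Real.sqrt 2 : ℂ)⁻¹

/-- `k`-fold tensor power of a qubit map. -/
def tpow {a b : ℕ} (A : QMap a b) : (k : ℕ) → QMap (a * k) (b * k)
  | 0 => (1 : QMap 0 0)
  | k + 1 => tens (tpow A k) A

/-- The wire in block `s` (of `b` blocks), at position `t` within the block (of size `a`). -/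
def wp {a b : ℕ} (s : Fin b) (t : Fin a) : Fin (a * b) :=
  ⟨a * s.val + t.val, by
    have ht := t.isLt
    have hs := s.isLt
    have h1 : a * s.val + t.val < a * (s.val + 1) := by rw [Nat.mul_succ]; omega
    exact lt_of_lt_of_le h1 (Nat.mul_le_mul (le_refl a) hs)⟩

/-- The permutation `σ_{m,n}` regrouping `m` blocks of `n` wires into `n` blocks of `m` wires:
it reindexes bit strings `g : Fin m × Fin n → Bool` to `(s,t) ↦ g(t,s)`. -/
def sigmaQ (m n : ℕ) : QMap (n * m) (m * n) := fun j i =>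
  if ∀ (s : Fin m) (t : Fin n), j (wp t s) = i (wp s t) then 1 else 0


/-- Flip the first bit of a bit string. -/
def flip0 {m : ℕ} (hm : 1 ≤ m) (g : Fin m → Bool) : Fin m → Bool :=
  Function.update g ⟨0, hm⟩ (!g ⟨0, hm⟩)

lemma flip0_invol {m : ℕ} (hm : 1 ≤ m) (g : Fin m → Bool) :
    flip0 hm (flip0 hm g) = g := by
  funext k
  by_cases h : k = ⟨0, hm⟩ <;>
    simp [flip0, Function.update, h]

lemma sum_flip0 {m : ℕ} (hm : 1 ≤ m) (g : Fin m → Bool) :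
    (∑ k, (if flip0 hm g k then (1 : ZMod 2) else 0)) =
      (∑ k, (if g k then (1 : ZMod 2) else 0)) + 1 := by
  classical
  set a : Fin m := ⟨0, hm⟩
  have h1 : (∑ k, (if flip0 hm g k then (1 : ZMod 2) else 0)) =
      (if !g a then (1 : ZMod 2) else 0) + ∑ k ∈ Finset.univ.erase a, (if g k then (1 : ZMod 2) else 0) := by
    rw [show (fun k => if flip0 hm g k then (1 : ZMod 2) else 0) =
        Function.update (fun k => if g k then (1 : ZMod 2) else 0) a (if !g a then 1 else 0) from ?_]
    · rw [Finset.sum_update_of_mem (Finset.mem_univ a), Finset.erase_eq]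
    · funext k
      by_cases h : k = a <;> simp [flip0, Function.update, h, a]
  have h2 : (∑ k, (if g k then (1 : ZMod 2) else 0)) =
      (if g a then (1 : ZMod 2) else 0) + ∑ k ∈ Finset.univ.erase a, (if g k then (1 : ZMod 2) else 0) := by
    exact (Finset.add_sum_erase _ _ (Finset.mem_univ a)).symm
  rw [h1, h2]
  have h10 : (1 : ZMod 2) + 1 = 0 := rfl
  cases hg : g a
  · simp only [Bool.not_false, if_pos rfl, if_neg (by simp : ¬(false = true)), zero_add]
    exact add_comm 1 _
  · simp only [Bool.not_true, if_neg (by simp : ¬(false = true)), if_pos rfl, zero_add]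
    rw [add_right_comm, if_pos trivial, h10, zero_add]

lemma castTens_apply {m : ℕ} (hm : 1 ≤ m) (j i : Fin m → Bool) :
    castQ (by omega : 1 + (m - 1) = m) (by omega : 1 + (m - 1) = m)
        (tens Xg (1 : QMap (m - 1) (m - 1))) j i =
      if j = flip0 hm i then 1 else 0 := by
  classical
  simp only [castQ, tens, Matrix.reindex_apply, Matrix.submatrix_apply,
    Matrix.kroneckerMap_apply, bitEquiv, Xg, Matrix.one_apply,
    Equiv.arrowCongr_symm, Equiv.arrowCongr_apply, Equiv.trans_apply,
    Equiv.symm_trans_apply, Equiv.symm_symm, Equiv.refl_symm, Equiv.coe_refl,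
    Equiv.sumArrowEquivProdArrow]
  simp only [Equiv.coe_fn_mk, Equiv.arrowCongr_apply, Equiv.coe_refl, Function.comp,
    Equiv.symm_symm, id_eq]
  simp only [funext_iff, Function.comp_apply, Equiv.arrowCongr_apply, Equiv.coe_refl,
    Function.comp, Equiv.symm_symm, id_eq]
  have he0 : ((finCongr (by omega : 1 + (m - 1) = m)) (finSumFinEquiv (Sum.inl (0 : Fin 1))))
      = (⟨0, hm⟩ : Fin m) := rfl
  have her : ∀ x : Fin (m - 1),
      ((finCongr (by omega : 1 + (m - 1) = m)) (finSumFinEquiv (Sum.inr x)))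
        = (⟨1 + x.val, by have := x.2; omega⟩ : Fin m) := fun x => rfl
  simp only [he0, her]
  by_cases h0 : j ⟨0, hm⟩ = i ⟨0, hm⟩
  · rw [if_pos h0, zero_mul, if_neg]
    intro hall
    have h := hall ⟨0, hm⟩
    rw [flip0, Function.update_self, h0] at h
    revert h; cases i ⟨0, hm⟩ <;> simp
  · rw [if_neg h0, one_mul]
    by_cases ht : ∀ x : Fin (m - 1),
        j ⟨1 + x.val, by have := x.2; omega⟩ = i ⟨1 + x.val, by have := x.2; omega⟩
    · rw [if_pos ht, if_pos]
      intro k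
      by_cases hk : k = ⟨0, hm⟩
      · subst hk
        rw [flip0, Function.update_self]
        revert h0; cases hji : j ⟨0, hm⟩ <;> cases hii : i ⟨0, hm⟩ <;> simp
      · have hk1 : 1 ≤ k.val := by
          rcases Nat.eq_zero_or_pos k.val with h | h
          · exact absurd (Fin.ext h) hk
          · omega
        have h := ht ⟨k.val - 1, by have := k.2; omega⟩
        have hkk : (⟨1 + (k.val - 1), by have := k.2; omega⟩ : Fin m) = k := by
          apply Fin.ext; simp; omega
        rw [hkk] at h
        rw [flip0, Function.update_of_ne hk]
        exact h
    · rw [if_neg ht, if_neg]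
      intro hall
      apply ht
      intro x
      have h := hall ⟨1 + x.val, by have := x.2; omega⟩
      rwa [flip0, Function.update_of_ne (by
        intro hc
        have := congrArg Fin.val hc
        simp at this)] at h

/-- a NOT gate on one leg of an X-spider can be moved to any other leg. -/
theorem zh_not_commute (m n : ℕ) (hm : 1 ≤ m) (hn : 1 ≤ n) :
    Xsp m n *
      castQ (by omega : 1 + (m - 1) = m) (by omega : 1 + (m - 1) = m)
        (tens Xg (1 : QMap (m - 1) (m - 1))) =
    castQ (by omega : 1 + (n - 1) = n) (by omega : 1 + (n - 1) = n)
        (tens Xg (1 : QMap (n - 1) (n - 1))) * Xsp m n := by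
  classical
  ext j i
  rw [Matrix.mul_apply, Matrix.mul_apply]
  have hcomm : ∀ a : Fin n → Bool, (j = flip0 hn a) = (a = flip0 hn j) := by
    intro a
    apply propext
    constructor
    · intro h; rw [h, flip0_invol]
    · intro h; rw [h, flip0_invol]
  simp only [castTens_apply hm, castTens_apply hn, hcomm, mul_ite, mul_one, mul_zero,
    ite_mul, one_mul, zero_mul, Finset.sum_ite_eq', Finset.mem_univ, if_true]
  simp only [Xsp]
  rw [sum_flip0 hm i, sum_flip0 hn j]
  have hc : (∑ k, (if i k then (1 : ZMod 2) else 0)) + 1 + (∑ k, (if j k then (1 : ZMod 2) else 0))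
      = (∑ k, (if i k then (1 : ZMod 2) else 0)) + ((∑ k, (if j k then (1 : ZMod 2) else 0)) + 1) := by
    ring
  rw [hc]
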